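/- Let X be a finite indecomposable quandle, b ∈ X, G_X its enveloping group, and D_X = [G_X, G_X] its commutator subgroup. Then the element e_b has infinite order in G_X, the subgroups D_X and ⟨e_b⟩ intersect trivially, and together they generate G_X; hence G_X is the internal semidirect product of D_X by the infinite cyclic subgroup ⟨e_b⟩. -/

import Mathlib

open Rack Quandles
open scoped commutatorElement

section Aux

variable {X : Type*} [Quandle X]

/-- The conjugation relation satisfied by the generators of the enveloping group. -/
lemma envel_conj (z y : X) :
    (Rack.toEnvelGroup X (z ◃ y) : Rack.EnvelGroup X) =
      (Rack.toEnvelGroup X z : Rack.EnvelGroup X) * Rack.toEnvelGroup X y *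
        (Rack.toEnvelGroup X z : Rack.EnvelGroup X)⁻¹ := by
  have h := (Rack.toEnvelGroup X).map_act' (x := z) (y := y)
  exact h

/-- The degree map: the group homomorphism `G_X →* Multiplicative ℤ` sending each
generator `e_x` to `1`. -/
noncomputable def degHom (X : Type*) [Quandle X] :
    Rack.EnvelGroup X →* Multiplicative ℤ :=
  Rack.toEnvelGroup.map
    { toFun := fun _ => Multiplicative.ofAdd (1 : ℤ)
      map_act' := by
        intro x y
        simp [Quandle.conj_act_eq_conj] }

lemma degHom_gen (x : X) :
    degHom X (Rack.toEnvelGroup X x : Rack.EnvelGroup X) = Multiplicative.ofAdd (1 : ℤ) := by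
  have h := Rack.toEnvelGroup.univ X (Multiplicative ℤ)
    { toFun := fun _ => Multiplicative.ofAdd (1 : ℤ)
      map_act' := by
        intro x y
        simp [Quandle.conj_act_eq_conj] }
  exact DFunLike.congr_fun h x

end Aux

/-- Let `X` be a finite indecomposable quandle (the inner automorphism
group, generated by the translations `φ_x`, acts transitively on `X`), let `b ∈ X`, `G_X`
the enveloping group and `D_X = [G_X, G_X]`. Then `e_b` has infinite order in `G_X`,
`D_X ∩ ⟨e_b⟩ = 1` and `D_X ⊔ ⟨e_b⟩ = G_X`; hence `G_X` is the internal semidirect product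
of `D_X` by the infinite cyclic subgroup `⟨e_b⟩`. -/
theorem envelGroup_semidirect_of_indecomposable_quandle
    {X : Type*} [Quandle X] [Finite X]
    (hindec : ∀ x y : X,
      ∃ σ ∈ Subgroup.closure (Set.range (fun z : X => Rack.act' z) : Set (Equiv.Perm X)),
        σ x = y)
    (b : X) :
    ¬ IsOfFinOrder ((Rack.toEnvelGroup X b : Quandle.Conj (Rack.EnvelGroup X)) :
        Rack.EnvelGroup X) ∧
    commutator (Rack.EnvelGroup X) ⊓
      Subgroup.zpowers ((Rack.toEnvelGroup X b : Quandle.Conj (Rack.EnvelGroup X)) :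
        Rack.EnvelGroup X) = ⊥ ∧
    commutator (Rack.EnvelGroup X) ⊔
      Subgroup.zpowers ((Rack.toEnvelGroup X b : Quandle.Conj (Rack.EnvelGroup X)) :
        Rack.EnvelGroup X) = ⊤ := by
  set G := Rack.EnvelGroup X
  set e : X → G := fun x => (Rack.toEnvelGroup X x : G) with he
  set f := degHom X with hf
  have hfe : ∀ x : X, f (e x) = Multiplicative.ofAdd (1 : ℤ) := fun x => degHom_gen x
  refine ⟨?_, ?_, ?_⟩
  · -- infinite order
    intro h
    obtain ⟨n, hn, hpow⟩ := (isOfFinOrder_iff_pow_eq_one).mp h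
    have h1 : f ((e b) ^ n) = 1 := by rw [hpow]; simp
    rw [map_pow, hfe] at h1
    have : (n : ℤ) = 0 := by
      have := congrArg Multiplicative.toAdd h1
      simpa using this
    omega
  · -- trivial intersection
    refine le_antisymm ?_ bot_le
    rintro g ⟨hgc, hgz⟩
    obtain ⟨k, hk⟩ := hgz
    have h1 : f g = 1 := Abelianization.commutator_subset_ker f hgc
    rw [← hk, map_zpow, hfe] at h1
    have hk0 : k = 0 := by
      have := congrArg Multiplicative.toAdd h1
      simpa using this
    simp [← hk, hk0, Subgroup.mem_bot]
  · -- join is everything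
    set H : Subgroup G := commutator G ⊔ Subgroup.zpowers (e b) with hH
    have hcle : commutator G ≤ H := le_sup_left
    have hcomm_mem : ∀ a c : G, ⁅a, c⁆ ∈ H := by
      intro a c
      apply hcle
      rw [commutator_def]
      exact Subgroup.commutator_mem_commutator (Subgroup.mem_top a) (Subgroup.mem_top c)
    have hnorm : H.Normal := by
      constructor
      intro h hh g
      have : g * h * g⁻¹ = ⁅g, h⁆ * h := by group
      rw [this]
      exact H.mul_mem (hcomm_mem g h) hh
    let π : G →* G ⧸ H := QuotientGroup.mk' H
    have hπcomm : ∀ a c : G, π a * π c = π c * π a := by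
      intro a c
      have h1 : π ⁅a, c⁆ = 1 := (QuotientGroup.eq_one_iff _).mpr (hcomm_mem a c)
      rw [commutatorElement_def] at h1
      simp only [map_mul, map_inv] at h1
      have h2 : ⁅π a, π c⁆ = 1 := by rw [commutatorElement_def]; exact h1
      exact commutatorElement_eq_one_iff_mul_comm.mp h2
    have key : ∀ z y : X, π (e (z ◃ y)) = π (e y) := by
      intro z y
      rw [he]
      simp only []
      rw [envel_conj z y, map_mul, map_mul, map_inv]
      rw [hπcomm]
      group
    have hclosure : ∀ σ ∈ Subgroup.closure
        (Set.range (fun z : X => Rack.act' z) : Set (Equiv.Perm X)),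
        ∀ y : X, π (e (σ y)) = π (e y) := by
      intro σ hσ
      induction hσ using Subgroup.closure_induction with
      | mem τ hτ =>
        obtain ⟨z, rfl⟩ := hτ
        intro y
        have : Rack.act' z y = z ◃ y := Rack.act'_apply z y
        rw [this]
        exact key z y
      | one => intro y; simp
      | mul σ τ hσ' hτ' ihσ ihτ =>
        intro y
        have : (σ * τ) y = σ (τ y) := rfl
        rw [this, ihσ, ihτ]
      | inv σ hσ' ihσ =>
        intro y
        have h1 := ihσ (σ⁻¹ y)
        have h2 : σ (σ⁻¹ y) = y := Equiv.apply_symm_apply σ y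
        rw [h2] at h1
        exact h1.symm
    have hebH : e b ∈ H := Subgroup.mem_sup_right (Subgroup.mem_zpowers (e b))
    have hgen : ∀ x : X, π (e x) = 1 := by
      intro x
      obtain ⟨σ, hσ, hσx⟩ := hindec b x
      have := hclosure σ hσ b
      rw [hσx] at this
      rw [this]
      exact (QuotientGroup.eq_one_iff _).mpr hebH
    -- universal property: π is the trivial homomorphism
    let t : X →◃ Quandle.Conj (G ⧸ H) :=
      { toFun := fun _ => 1
        map_act' := by intro x y; simp [Quandle.conj_act_eq_conj] }
    have ht1 : (Quandle.Conj.map π).comp (Rack.toEnvelGroup X) = t := by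
      apply DFunLike.ext
      intro x
      exact hgen x
    have ht2 : t = (Quandle.Conj.map (1 : G →* G ⧸ H)).comp (Rack.toEnvelGroup X) := by
      apply DFunLike.ext
      intro x
      rfl
    have hπ1 : π = (1 : G →* G ⧸ H) := by
      rw [Rack.toEnvelGroup.univ_uniq X (G ⧸ H) t π ht1.symm,
        Rack.toEnvelGroup.univ_uniq X (G ⧸ H) t (1 : G →* G ⧸ H) ht2]
    ext g
    simp only [Subgroup.mem_top, iff_true]
    have : π g = 1 := by rw [hπ1]; rfl
    exact (QuotientGroup.eq_one_iff g).mp this
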